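/- Let d ≥ 1, x ∈ ℤ^d, n ≥ 1, and let T ⊆ ℤ^d be a 'star-shaped territory' around x in the sense that whenever y ∈ T and d_∞(x,y') + d_∞(y',y) = d_∞(x,y) then y' ∈ T, and assume T contains the closed d_∞-ball of radius n around x. For m > n, let S_m = { z ∈ T : d_∞(x,z) = m } (the sphere of the signal at step m inside the territory). Then |S_m| / |{ z ∈ T : d_∞(x,z) < m }| ≤ 2d(2m+1)^{d−1} / m^d · (constant depending only on d); in particular the ratio is O(1/n) uniformly over m > n. -/

import Mathlib

/-- The sup-metric (ℓ^∞ distance) on `ℤ^d`, valued in `ℕ`. -/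
def dinf {d : ℕ} (x y : Fin d → ℤ) : ℕ :=
  Finset.univ.sup fun i => (x i - y i).natAbs

open Finset

namespace StarTerr

/-- 1D neighborhood of a set, intersected with the box `[-k,k]`. -/
noncomputable def nb (k t : ℕ) (A : Finset ℤ) : Finset ℤ :=
  (Finset.Icc (-(k:ℤ)) k).filter fun w => ∃ a ∈ A, (w - a).natAbs ≤ t

lemma card_Icc_int (k : ℕ) : (Finset.Icc (-(k:ℤ)) k).card = 2*k+1 := by
  rw [Int.card_Icc]; omega

lemma one_step (k : ℕ) (W : Finset ℤ) (hW : ∀ u ∈ W, u.natAbs ≤ k+1) :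
    min (2*k+1) W.card ≤ (nb k 1 W).card := by
  classical
  have hVsub : nb k 1 W ⊆ Finset.Icc (-(k:ℤ)) k := filter_subset _ _
  set V := nb k 1 W with hV
  set D := (Finset.Icc (-(k:ℤ)) k) \ V with hD
  have hcardDV : D.card + V.card = 2*k+1 := by
    rw [hD, Finset.card_sdiff_add_card_eq_card hVsub, card_Icc_int]
  rcases D.eq_empty_or_nonempty with h | h
  · have : V.card = 2*k+1 := by rw [h] at hcardDV; simpa using hcardDV
    omega
  · have hWsub : W ⊆ Finset.Icc (-(k:ℤ)-1) (k+1) := by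
      intro u hu; have := hW u hu; simp only [Finset.mem_Icc]; omega
    set Ms := (Finset.Icc (-(k:ℤ)-1) (k+1)) \ W with hMs
    have hcardMW : Ms.card + W.card = 2*k+3 := by
      rw [hMs, Finset.card_sdiff_add_card_eq_card hWsub, Int.card_Icc]; omega
    set p := D.min' h with hp
    set q := D.max' h with hq
    have hpD : p ∈ D := D.min'_mem h
    have hqD : q ∈ D := D.max'_mem h
    have hDmem : ∀ w ∈ D, (-(k:ℤ) ≤ w ∧ w ≤ k) ∧ w ∉ V := by
      intro w hw
      have h1 := (Finset.mem_sdiff.mp hw).1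
      have h2 := (Finset.mem_sdiff.mp hw).2
      rw [Finset.mem_Icc] at h1
      exact ⟨h1, h2⟩
    have hDnotW : ∀ w ∈ D, ∀ e : ℤ, e.natAbs ≤ 1 → (w + e) ∉ W := by
      intro w hw e he hmem
      obtain ⟨hIcc, hwV⟩ := hDmem w hw
      apply hwV
      refine Finset.mem_filter.mpr ⟨Finset.mem_Icc.mpr ⟨hIcc.1, hIcc.2⟩, ⟨w+e, hmem, by omega⟩⟩
    have hsub : insert (p-1) (insert (q+1) D) ⊆ Ms := by
      intro w hw
      simp only [Finset.mem_insert] at hw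
      rw [hMs, Finset.mem_sdiff, Finset.mem_Icc]
      rcases hw with rfl | rfl | hw
      · obtain ⟨hIcc, _⟩ := hDmem p hpD
        refine ⟨by omega, ?_⟩
        have := hDnotW p hpD (-1) (by omega)
        simpa [sub_eq_add_neg] using this
      · obtain ⟨hIcc, _⟩ := hDmem q hqD
        refine ⟨by omega, ?_⟩
        have := hDnotW q hqD 1 (by omega)
        simpa using this
      · obtain ⟨hIcc, _⟩ := hDmem w hw
        refine ⟨by omega, ?_⟩
        have := hDnotW w hw 0 (by omega)
        simpa using this
    have hcardins : (insert (p-1) (insert (q+1) D)).card = D.card + 2 := by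
      rw [Finset.card_insert_of_notMem, Finset.card_insert_of_notMem]
      · intro hmem
        exact absurd (D.le_max' _ hmem) (by omega)
      · intro hmem
        simp only [Finset.mem_insert] at hmem
        rcases hmem with heq | hmem
        · have hpq : p ≤ q := Finset.min'_le _ _ hqD
          omega
        · exact absurd (D.min'_le _ hmem) (by omega)
    have := Finset.card_le_card hsub
    omega


lemma l1d (t : ℕ) : ∀ (k : ℕ) (A : Finset ℤ), (∀ a ∈ A, a.natAbs ≤ k + t) →
    min (2*k+1) A.card ≤ (nb k t A).card := by
  induction t with
  | zero =>
    intro k A hA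
    have : nb k 0 A = A := by
      ext w
      simp only [nb, Finset.mem_filter, Finset.mem_Icc]
      constructor
      · rintro ⟨_, a, ha, hle⟩
        have : w = a := by omega
        rwa [this]
      · intro hw
        have := hA w hw
        exact ⟨by omega, w, hw, by omega⟩
    rw [this]
    omega
  | succ t ih =>
    intro k A hA
    set W := nb (k+1) t A with hWdef
    have hW1 : ∀ u ∈ W, u.natAbs ≤ k+1 := by
      intro u hu
      have := (Finset.mem_filter.mp hu).1
      rw [Finset.mem_Icc] at this
      omega
    have hIH : min (2*(k+1)+1) A.card ≤ W.card := by
      apply ih (k+1) A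
      intro a ha; have := hA a ha; omega
    have hsub : nb k 1 W ⊆ nb k (t+1) A := by
      intro w hw
      obtain ⟨hIcc, u, hu, hle⟩ := Finset.mem_filter.mp hw
      obtain ⟨_, a, ha, hle2⟩ := Finset.mem_filter.mp hu
      refine Finset.mem_filter.mpr ⟨hIcc, a, ha, ?_⟩
      have h3 := Int.natAbs_add_le (w - u) (u - a)
      simp only [sub_add_sub_cancel] at h3
      omega
    have h1 := one_step k W hW1
    have h2 := Finset.card_le_card hsub
    omega

lemma ratio1d (k t : ℕ) (A : Finset ℤ) (hA : ∀ a ∈ A, a.natAbs ≤ k + t) :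
    (2*k+1) * A.card ≤ (2*(k+t)+1) * (nb k t A).card := by
  have hmin := l1d t k A hA
  have hAcard : A.card ≤ 2*(k+t)+1 := by
    have hsub : A ⊆ Finset.Icc (-((k+t):ℤ)) (k+t) := by
      intro a ha; have := hA a ha; rw [Finset.mem_Icc]; push_cast; omega
    calc A.card ≤ _ := Finset.card_le_card hsub
      _ = 2*(k+t)+1 := card_Icc_int (k+t)
  rcases le_or_gt A.card (2*k+1) with h | h
  · have : A.card ≤ (nb k t A).card := by omega
    calc (2*k+1) * A.card ≤ (2*k+1) * (nb k t A).card := Nat.mul_le_mul_left _ this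
      _ ≤ (2*(k+t)+1) * (nb k t A).card := Nat.mul_le_mul_right _ (by omega)
  · have hnb : 2*k+1 ≤ (nb k t A).card := by omega
    calc (2*k+1) * A.card ≤ (2*k+1) * (2*(k+t)+1) := Nat.mul_le_mul_left _ hAcard
      _ = (2*(k+t)+1) * (2*k+1) := Nat.mul_comm _ _
      _ ≤ (2*(k+t)+1) * (nb k t A).card := Nat.mul_le_mul_left _ hnb


/-- Multi-dimensional neighborhood of a set, intersected with box `∏ [-K j, K j]`. -/
noncomputable def nbD {D : ℕ} (K : Fin D → ℕ) (t : ℕ) (A : Finset (Fin D → ℤ)) : Finset (Fin D → ℤ) :=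
  (Fintype.piFinset fun j => Finset.Icc (-(K j : ℤ)) (K j)).filter
    fun w => ∃ a ∈ A, ∀ j, (w j - a j).natAbs ≤ t

lemma lemC (D : ℕ) : ∀ (K M : Fin D → ℕ) (t : ℕ), (∀ j, M j = K j + t) →
    ∀ A : Finset (Fin D → ℤ), (∀ a ∈ A, ∀ j, (a j).natAbs ≤ M j) →
    (∏ j, (2 * K j + 1)) * A.card ≤ (∏ j, (2 * M j + 1)) * (nbD K t A).card := by
  induction D with
  | zero =>
    intro K M t hKM A hA
    simp only [Finset.univ_eq_empty, Finset.prod_empty, one_mul]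
    rcases A.eq_empty_or_nonempty with rfl | ⟨a, ha⟩
    · simp
    · have h1 : A.card ≤ 1 := by
        apply Finset.card_le_one.mpr
        intro b hb c hc
        funext j; exact j.elim0
      have h2 : a ∈ nbD K t A := by
        refine Finset.mem_filter.mpr ⟨?_, a, ha, fun j => j.elim0⟩
        rw [Fintype.mem_piFinset]; intro j; exact j.elim0
      have := Finset.card_pos.mpr ⟨a, h2⟩
      omega
  | succ D ih =>
    intro K M t hKM A hA
    classical
    set Kt : Fin D → ℕ := fun j => K j.succ with hKt
    set Mt : Fin D → ℕ := fun j => M j.succ with hMt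
    set Abar : ℤ → Finset (Fin D → ℤ) :=
      fun w => (A.filter fun a => (a 0 - w).natAbs ≤ t).image (fun a => Fin.tail a) with hAbar
    set cns : ℤ → (Fin D → ℤ) → (Fin (D+1) → ℤ) := fun w p => Fin.cons w p with hcns
    -- Step (i)
    have stepi : (∑ w ∈ Finset.Icc (-(K 0:ℤ)) (K 0), (nbD Kt t (Abar w)).card)
        ≤ (nbD K t A).card := by
      have hdisj : ∀ w ∈ Finset.Icc (-(K 0:ℤ)) (K 0), ∀ w' ∈ Finset.Icc (-(K 0:ℤ)) (K 0),
          w ≠ w' → Disjoint ((nbD Kt t (Abar w)).image (cns w))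
            ((nbD Kt t (Abar w')).image (cns w')) := by
        intro w _ w' _ hne
        rw [Finset.disjoint_left]
        rintro z hz hz'
        obtain ⟨p, _, rfl⟩ := Finset.mem_image.mp hz
        obtain ⟨p', _, heq⟩ := Finset.mem_image.mp hz'
        apply hne
        have := congrFun heq 0
        simpa [hcns, Fin.cons_zero] using this.symm
      have hsubU : (Finset.Icc (-(K 0:ℤ)) (K 0)).biUnion
          (fun w => (nbD Kt t (Abar w)).image (cns w)) ⊆ nbD K t A := by
        intro z hz
        obtain ⟨w, hw, hz⟩ := Finset.mem_biUnion.mp hz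
        obtain ⟨p, hp, rfl⟩ := Finset.mem_image.mp hz
        obtain ⟨hpbox, abar, habar, hpnear⟩ := Finset.mem_filter.mp hp
        obtain ⟨a0, ha0, rfl⟩ := Finset.mem_image.mp habar
        obtain ⟨ha0A, ha0near⟩ := Finset.mem_filter.mp ha0
        refine Finset.mem_filter.mpr ⟨?_, a0, ha0A, ?_⟩
        · rw [Fintype.mem_piFinset]
          intro j
          induction j using Fin.cases with
          | zero => simpa [hcns, Fin.cons_zero] using hw
          | succ j =>
            simp only [hcns, Fin.cons_succ]
            exact (Fintype.mem_piFinset.mp hpbox) j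
        · intro j
          induction j using Fin.cases with
          | zero => simp only [hcns, Fin.cons_zero]; omega
          | succ j =>
            simp only [hcns, Fin.cons_succ]
            exact hpnear j
      calc (∑ w ∈ Finset.Icc (-(K 0:ℤ)) (K 0), (nbD Kt t (Abar w)).card)
          = ∑ w ∈ Finset.Icc (-(K 0:ℤ)) (K 0), ((nbD Kt t (Abar w)).image (cns w)).card := by
            apply Finset.sum_congr rfl
            intro w _
            refine (Finset.card_image_of_injOn ?_).symm
            intro p _ p' _ h
            funext j
            have := congrFun h j.succ
            simpa [hcns, Fin.cons_succ] using this
        _ = ((Finset.Icc (-(K 0:ℤ)) (K 0)).biUnion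
              (fun w => (nbD Kt t (Abar w)).image (cns w))).card :=
            (Finset.card_biUnion hdisj).symm
        _ ≤ (nbD K t A).card := Finset.card_le_card hsubU
    -- Step (iii)
    have stepiii : (2 * K 0 + 1) * A.card
        ≤ (2 * M 0 + 1) * ∑ w ∈ Finset.Icc (-(K 0:ℤ)) (K 0), (Abar w).card := by
      set T := A.image Fin.tail with hT
      set Hp : (Fin D → ℤ) → Finset ℤ :=
        fun p => (A.filter fun a => Fin.tail a = p).image (fun a => a 0) with hHp
      have hswap : ∑ w ∈ Finset.Icc (-(K 0:ℤ)) (K 0), (Abar w).card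
          = ∑ p ∈ T, (nb (K 0) t (Hp p)).card := by
        have h1 : ∀ w, (Abar w).card = ∑ p ∈ T, if p ∈ Abar w then 1 else 0 := by
          intro w
          rw [← Finset.card_filter, Finset.filter_mem_eq_inter,
            Finset.inter_eq_right.mpr (Finset.image_subset_image (Finset.filter_subset _ _))]
        have h2 : ∀ p, (Finset.Icc (-(K 0:ℤ)) (K 0)).filter (fun w => p ∈ Abar w)
            = nb (K 0) t (Hp p) := by
          intro p
          apply Finset.ext
          intro w
          simp only [nb, Finset.mem_filter]
          constructor
          · rintro ⟨hIcc, hpA⟩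
            refine ⟨hIcc, ?_⟩
            obtain ⟨a, ha, rfl⟩ := Finset.mem_image.mp hpA
            obtain ⟨haA, hanear⟩ := Finset.mem_filter.mp ha
            exact ⟨a 0, Finset.mem_image_of_mem _ (Finset.mem_filter.mpr ⟨haA, rfl⟩), by omega⟩
          · rintro ⟨hIcc, v, hv, hnear⟩
            obtain ⟨a, ha, rfl⟩ := Finset.mem_image.mp hv
            obtain ⟨haA, htail⟩ := Finset.mem_filter.mp ha
            refine ⟨hIcc, ?_⟩
            rw [← htail]
            exact Finset.mem_image_of_mem _ (Finset.mem_filter.mpr ⟨haA, by omega⟩)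
        calc ∑ w ∈ Finset.Icc (-(K 0:ℤ)) (K 0), (Abar w).card
            = ∑ w ∈ Finset.Icc (-(K 0:ℤ)) (K 0), ∑ p ∈ T, if p ∈ Abar w then 1 else 0 := by
              exact Finset.sum_congr rfl (fun w _ => h1 w)
          _ = ∑ p ∈ T, ∑ w ∈ Finset.Icc (-(K 0:ℤ)) (K 0), if p ∈ Abar w then 1 else 0 :=
              Finset.sum_comm
          _ = ∑ p ∈ T, (nb (K 0) t (Hp p)).card := by
              apply Finset.sum_congr rfl
              intro p _
              rw [← h2 p, Finset.card_filter]
      have hfiber : ∑ p ∈ T, (Hp p).card = A.card := by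
        have h3 : ∀ p ∈ T, (Hp p).card = (A.filter fun a => Fin.tail a = p).card := by
          intro p _
          apply Finset.card_image_of_injOn
          intro a ha b hb hab
          obtain ⟨_, ha2⟩ := Finset.mem_filter.mp ha
          obtain ⟨_, hb2⟩ := Finset.mem_filter.mp hb
          have hab' : a 0 = b 0 := hab
          have : Fin.cons (a 0) (Fin.tail a) = Fin.cons (b 0) (Fin.tail b) := by
            rw [ha2, hb2, hab']
          rw [Fin.cons_self_tail, Fin.cons_self_tail] at this
          exact this
        rw [Finset.sum_congr rfl h3]
        exact (Finset.card_eq_sum_card_fiberwise (fun a ha => Finset.mem_image_of_mem _ ha)).symm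
      have hrat : ∀ p ∈ T, (2 * K 0 + 1) * (Hp p).card ≤ (2 * M 0 + 1) * (nb (K 0) t (Hp p)).card := by
        intro p _
        have := ratio1d (K 0) t (Hp p) ?_
        · rwa [← hKM 0] at this
        · intro v hv
          obtain ⟨a, ha, rfl⟩ := Finset.mem_image.mp hv
          have := hA a (Finset.mem_filter.mp ha).1 0
          rw [hKM 0] at this
          exact this
      calc (2 * K 0 + 1) * A.card = ∑ p ∈ T, (2 * K 0 + 1) * (Hp p).card := by
            rw [← Finset.mul_sum, hfiber]
        _ ≤ ∑ p ∈ T, (2 * M 0 + 1) * (nb (K 0) t (Hp p)).card := Finset.sum_le_sum hrat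
        _ = (2 * M 0 + 1) * ∑ w ∈ Finset.Icc (-(K 0:ℤ)) (K 0), (Abar w).card := by
            rw [← Finset.mul_sum, hswap]
    -- Step (ii): apply IH to each Abar w
    have stepii : ∀ w, (∏ j, (2 * Kt j + 1)) * (Abar w).card
        ≤ (∏ j, (2 * Mt j + 1)) * (nbD Kt t (Abar w)).card := by
      intro w
      apply ih Kt Mt t (fun j => hKM j.succ)
      intro abar habar j
      obtain ⟨a, ha, rfl⟩ := Finset.mem_image.mp habar
      exact hA a (Finset.mem_filter.mp ha).1 j.succ
    -- Assembly
    calc (∏ j, (2 * K j + 1)) * A.card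
        = (∏ j, (2 * Kt j + 1)) * ((2 * K 0 + 1) * A.card) := by
          rw [Fin.prod_univ_succ]; ring
      _ ≤ (∏ j, (2 * Kt j + 1)) *
            ((2 * M 0 + 1) * ∑ w ∈ Finset.Icc (-(K 0:ℤ)) (K 0), (Abar w).card) :=
          Nat.mul_le_mul_left _ stepiii
      _ = (2 * M 0 + 1) * ∑ w ∈ Finset.Icc (-(K 0:ℤ)) (K 0), (∏ j, (2 * Kt j + 1)) * (Abar w).card := by
          rw [Finset.mul_sum, Finset.mul_sum, Finset.mul_sum]
          exact Finset.sum_congr rfl fun w _ => by ring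
      _ ≤ (2 * M 0 + 1) * ∑ w ∈ Finset.Icc (-(K 0:ℤ)) (K 0),
            (∏ j, (2 * Mt j + 1)) * (nbD Kt t (Abar w)).card := by
          apply Nat.mul_le_mul_left
          exact Finset.sum_le_sum (fun w _ => stepii w)
      _ = ((2 * M 0 + 1) * ∏ j, (2 * Mt j + 1)) *
            ∑ w ∈ Finset.Icc (-(K 0:ℤ)) (K 0), (nbD Kt t (Abar w)).card := by
          rw [Finset.mul_sum, Finset.mul_sum]
          exact Finset.sum_congr rfl fun w _ => by ring
      _ ≤ ((2 * M 0 + 1) * ∏ j, (2 * Mt j + 1)) * (nbD K t A).card :=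
          Nat.mul_le_mul_left _ stepi
      _ = (∏ j, (2 * M j + 1)) * (nbD K t A).card := by
          rw [Fin.prod_univ_succ]


lemma coord_le_dinf {d : ℕ} (x y : Fin d → ℤ) (i : Fin d) :
    (x i - y i).natAbs ≤ dinf x y := by
  unfold dinf; exact Finset.le_sup (f := fun i => (x i - y i).natAbs) (Finset.mem_univ i)

lemma dinf_le {d : ℕ} {x y : Fin d → ℤ} {r : ℕ} (h : ∀ i, (x i - y i).natAbs ≤ r) :
    dinf x y ≤ r := by
  unfold dinf; exact Finset.sup_le fun i _ => h i

lemma dinf_triangle {d : ℕ} (x z y : Fin d → ℤ) : dinf x y ≤ dinf x z + dinf z y := by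
  apply dinf_le
  intro i
  have h1 := coord_le_dinf x z i
  have h2 := coord_le_dinf z y i
  have h3 := Int.natAbs_add_le (x i - z i) (z i - y i)
  simp only [sub_add_sub_cancel] at h3
  omega

lemma teleQ (D m : ℕ) (hm : 2 ≤ m) :
    m^2 * (2*m-1)^D ≤ (D+1) * (2*m+1) * ∑ i ∈ Finset.range m, (2*i+1)^D := by
  have h2m : 1 ≤ 2*m := by omega
  zify [h2m]
  set Qz : ℤ := ∑ i ∈ Finset.range m, (2*(i:ℤ)+1)^D with hQz
  have hQnn : 0 ≤ Qz := Finset.sum_nonneg fun i _ => by positivity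
  set f : ℕ → ℤ := fun i => (2*(i:ℤ)-1)^(D+1) with hf
  have htel : ∑ i ∈ Finset.range m, (f (i+1) - f i) = f m - f 0 := Finset.sum_range_sub f m
  have hbnd : ∀ i, f (i+1) - f i ≤ 2*(D+1)*(2*(i:ℤ)+1)^D := by
    intro i
    have hgeom := geom_sum₂_mul (2*(i:ℤ)+1) (2*(i:ℤ)-1) (D+1)
    have hx : (2*(i:ℤ)+1) - (2*(i:ℤ)-1) = 2 := by ring
    rw [hx] at hgeom
    have hfi : f (i+1) - f i = (∑ j ∈ Finset.range (D+1), (2*(i:ℤ)+1)^j * (2*(i:ℤ)-1)^(D-j)) * 2 := by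
      have hDD : ∀ j, D + 1 - 1 - j = D - j := fun j => by omega
      simp only [hDD] at hgeom
      rw [hgeom, hf]; push_cast; ring_nf
    rw [hfi]
    have hsumle : (∑ j ∈ Finset.range (D+1), (2*(i:ℤ)+1)^j * (2*(i:ℤ)-1)^(D-j))
        ≤ (D+1) * (2*(i:ℤ)+1)^D := by
      calc (∑ j ∈ Finset.range (D+1), (2*(i:ℤ)+1)^j * (2*(i:ℤ)-1)^(D-j))
          ≤ ∑ j ∈ Finset.range (D+1), (2*(i:ℤ)+1)^D := by
            apply Finset.sum_le_sum
            intro j hj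
            have hjD : j ≤ D := by
              have := Finset.mem_range.mp hj; omega
            have habs : |2*(i:ℤ)-1| ≤ 2*(i:ℤ)+1 := by
              rw [abs_le]; constructor <;> omega
            calc (2*(i:ℤ)+1)^j * (2*(i:ℤ)-1)^(D-j)
                ≤ |(2*(i:ℤ)+1)^j * (2*(i:ℤ)-1)^(D-j)| := le_abs_self _
              _ = (2*(i:ℤ)+1)^j * |2*(i:ℤ)-1|^(D-j) := by
                  rw [abs_mul, abs_pow, abs_pow, abs_of_nonneg (by positivity : (0:ℤ) ≤ 2*(i:ℤ)+1)]
              _ ≤ (2*(i:ℤ)+1)^j * (2*(i:ℤ)+1)^(D-j) := by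
                  apply mul_le_mul_of_nonneg_left
                  · exact pow_le_pow_left₀ (abs_nonneg _) habs _
                  · positivity
              _ = (2*(i:ℤ)+1)^D := by
                  rw [← pow_add]; congr 1; omega
        _ = (D+1) * (2*(i:ℤ)+1)^D := by
            rw [Finset.sum_const, Finset.card_range]; push_cast; ring
    nlinarith [hsumle]
  have hkey : (2*(m:ℤ)-1)^(D+1) - (-1:ℤ)^(D+1) ≤ 2*(D+1)*Qz := by
    have h1 : f m - f 0 ≤ ∑ i ∈ Finset.range m, 2*(D+1)*(2*(i:ℤ)+1)^D := by
      rw [← htel]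
      exact Finset.sum_le_sum fun i _ => hbnd i
    have h2 : ∑ i ∈ Finset.range m, 2*(D+1)*(2*(i:ℤ)+1)^D = 2*(D+1)*Qz := by
      rw [hQz, Finset.mul_sum]
    have h3 : f 0 = (-1:ℤ)^(D+1) := by simp [hf]
    have h4 : f m = (2*(m:ℤ)-1)^(D+1) := by simp [hf]
    rw [h3, h4] at h1
    rw [← h2]
    exact h1
  have hneg1 : (-1:ℤ)^(D+1) ≤ 1 := by
    rcases Nat.even_or_odd (D+1) with he | ho
    · rw [he.neg_one_pow]
    · rw [ho.neg_one_pow]; omega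
  have hstep : (2*(m:ℤ)-1)^(D+1) ≤ 2*(D+1)*Qz + 1 := by linarith
  set P : ℤ := (2*(m:ℤ)-1)^D with hP
  have hPpos : (1:ℤ) ≤ P := by
    rw [hP]
    calc (1:ℤ) = 1^D := (one_pow D).symm
      _ ≤ (2*(m:ℤ)-1)^D := pow_le_pow_left₀ (by norm_num) (by push_cast; omega) D
  set G : ℤ := ((D:ℤ)+1)*(2*(m:ℤ)+1)*Qz with hG
  have h5 : (2*(m:ℤ)+1) * ((2*(m:ℤ)-1)^(D+1)) ≤ (2*(m:ℤ)+1) * (2*(D+1)*Qz + 1) :=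
    mul_le_mul_of_nonneg_left hstep (by push_cast; omega)
  have h6 : (2*(m:ℤ)+1) * ((2*(m:ℤ)-1)^(D+1)) = 4*((m:ℤ)^2*P) - P := by
    rw [hP, pow_succ]; ring
  have h7 : (2*(m:ℤ)+1) * (2*(D+1)*Qz + 1) = 2*G + (2*(m:ℤ)+1) := by
    rw [hG]; push_cast; ring
  have hfac : (2*(m:ℤ)+1) ≤ 2*((m:ℤ)^2*P) - P := by
    have h8 : (2*(m:ℤ)^2-1) * 1 ≤ (2*(m:ℤ)^2-1) * P := by
      apply mul_le_mul_of_nonneg_left hPpos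
      have : (2:ℤ) ≤ (m:ℤ) := by exact_mod_cast hm
      nlinarith
    have h9 : (2*(m:ℤ)+1) ≤ (2*(m:ℤ)^2-1) := by
      have : (2:ℤ) ≤ (m:ℤ) := by exact_mod_cast hm
      nlinarith
    nlinarith
  have hfinal : (m:ℤ)^2*P ≤ G := by linarith
  calc (m:ℤ)^2 * P ≤ G := hfinal
    _ = ((D:ℤ)+1)*(2*(m:ℤ)+1)*Qz := hG

lemma sum_Icc_one (f : ℕ → ℕ) (m : ℕ) :
    ∑ k ∈ Finset.Icc 1 m, f k = ∑ i ∈ Finset.range m, f (i+1) := by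
  induction m with
  | zero => simp
  | succ m ih => rw [Finset.sum_range_succ, ← ih, Finset.sum_Icc_succ_top (by omega)]

end StarTerr

open StarTerr

/- Cone-volume inequality in a star-shaped territory: if `T ⊆ ℤ^d` is star-shaped around
`x` (closed under taking points on `d_∞`-geodesics towards `x`) and contains the closed
`d_∞`-ball of radius `n` around `x`, then for every `m > n` the ball
`{z ∈ T : d_∞(x,z) ≤ m}` has at least `(m/(2m+1)) · |{z ∈ T : d_∞(x,z) = m}| · (m/d)`
elements; hence the sphere-to-ball ratio is `O(1/n)` uniformly over `m > n`. -/
theorem star_territory_cone_volume {d : ℕ} (hd : 1 ≤ d) (n m : ℕ) (hn : 1 ≤ n) (hm : n < m)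
    (x : Fin d → ℤ) (T : Finset (Fin d → ℤ))
    (hstar : ∀ y ∈ T, ∀ y' : Fin d → ℤ, dinf x y' + dinf y' y = dinf x y → y' ∈ T)
    (hball : ∀ z : Fin d → ℤ, dinf x z ≤ n → z ∈ T) :
    ((m : ℝ) / (2 * m + 1)) * ((T.filter fun z => dinf x z = m).card : ℝ) * ((m : ℝ) / d)
      ≤ ((T.filter fun z => dinf x z ≤ m).card : ℝ) := by
  classical
  obtain ⟨D, rfl⟩ : ∃ D, d = D + 1 := ⟨d - 1, by omega⟩
  have hm2 : 2 ≤ m := by omega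
  set S := T.filter (fun z => dinf x z = m) with hS
  set B := T.filter (fun z => dinf x z ≤ m) with hB
  -- the key natural number inequality
  have key : m^2 * S.card ≤ (D+1) * (2*m+1) * B.card := by
    -- classifier into 2d classes
    set F : (Fin (D+1) → ℤ) → Finset (Fin (D+1)) :=
      fun y => Finset.univ.filter (fun i => (x i - y i).natAbs = m) with hF
    set cls : (Fin (D+1) → ℤ) → (Fin (D+1)) × Bool := fun y =>
      if h : (F y).Nonempty then
        ((F y).min' h, decide (x ((F y).min' h) - y ((F y).min' h) < 0))
      else (0, true) with hcls
    set C : (Fin (D+1)) × Bool → Finset (Fin (D+1) → ℤ) :=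
      fun c => S.filter (fun y => cls y = c) with hC
    have hpart : S.card = ∑ c : (Fin (D+1)) × Bool, (C c).card :=
      Finset.card_eq_sum_card_fiberwise (fun y _ => Finset.mem_univ (cls y))
    -- class properties
    have hclassprop : ∀ i : Fin (D+1), ∀ s : Bool, ∀ y ∈ C (i, s),
        y ∈ T ∧ dinf x y = m ∧ x i - y i = (if s then -(m:ℤ) else m) ∧
          ∀ j, j < i → (x j - y j).natAbs < m := by
      intro i s y hy
      obtain ⟨hyS, hycls⟩ := Finset.mem_filter.mp hy
      obtain ⟨hyT, hym⟩ := Finset.mem_filter.mp hyS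
      have hne : (F y).Nonempty := by
        obtain ⟨i0, _, hi0⟩ := Finset.exists_mem_eq_sup Finset.univ Finset.univ_nonempty
          (fun i => (x i - y i).natAbs)
        refine ⟨i0, Finset.mem_filter.mpr ⟨Finset.mem_univ _, ?_⟩⟩
        rw [← hi0]; exact hym
      rw [hcls] at hycls
      simp only [dif_pos hne] at hycls
      rw [Prod.ext_iff] at hycls
      obtain ⟨hi, hs⟩ := hycls
      simp only at hi hs
      have himem : i ∈ F y := hi ▸ (F y).min'_mem hne
      have hinat : (x i - y i).natAbs = m := (Finset.mem_filter.mp himem).2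
      refine ⟨hyT, hym, ?_, ?_⟩
      · rw [hi] at hs
        cases s
        · simp only [decide_eq_false_iff_not, not_lt] at hs
          simp only [Bool.false_eq_true, if_false]
          omega
        · simp only [decide_eq_true_eq] at hs
          simp only [if_true]
          omega
      · intro j hj
        have hjge : j ∉ F y := by
          intro hjF
          have := (F y).min'_le j hjF
          rw [hi] at this
          exact absurd hj (not_lt.mpr this)
        have hjne : (x j - y j).natAbs ≠ m := by
          intro heq
          exact hjge (Finset.mem_filter.mpr ⟨Finset.mem_univ _, heq⟩)
        have hjle : (x j - y j).natAbs ≤ m := by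
          rw [← hym]; exact coord_le_dinf x y j
        omega
    -- transverse coordinates
    set τ : Fin (D+1) → (Fin (D+1) → ℤ) → (Fin D → ℤ) :=
      fun i y => fun j' => y (i.succAbove j') - x (i.succAbove j') with hτ
    set AA : (Fin (D+1)) × Bool → Finset (Fin D → ℤ) :=
      fun c => (C c).image (τ c.1) with hAA
    have hcardAA : ∀ c, (AA c).card = (C c).card := by
      rintro ⟨i, s⟩
      apply Finset.card_image_of_injOn
      intro y hy y' hy' heq
      obtain ⟨_, _, hyi, _⟩ := hclassprop i s y hy
      obtain ⟨_, _, hy'i, _⟩ := hclassprop i s y' hy'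
      funext j
      rcases eq_or_ne j i with rfl | hne
      · omega
      · obtain ⟨j', rfl⟩ := Fin.exists_succAbove_eq hne
        have h2 := congrFun heq j'
        simp only [hτ] at h2
        omega
    -- the box side-lengths
    set Kf : ℕ → Fin (D+1) → Fin D → ℕ :=
      fun k i j' => if i.succAbove j' < i then k - 1 else k with hKf
    have hbound : ∀ i s, ∀ a ∈ AA (i, s), ∀ j', (a j').natAbs ≤ Kf m i j' := by
      intro i s a ha j'
      obtain ⟨y, hy, rfl⟩ := Finset.mem_image.mp ha
      obtain ⟨_, hym, _, hlt⟩ := hclassprop i s y hy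
      have hcomm : (y (i.succAbove j') - x (i.succAbove j')).natAbs
          = (x (i.succAbove j') - y (i.succAbove j')).natAbs := by omega
      simp only [hτ, hKf]
      by_cases hc : i.succAbove j' < i
      · rw [if_pos hc]
        have := hlt _ hc
        omega
      · rw [if_neg hc]
        have := coord_le_dinf x y (i.succAbove j')
        rw [hym] at this
        omega
    -- the radial extension maps
    set ε : Bool → ℤ := fun s => if s then 1 else -1 with hε
    set ζ : ℕ → Fin (D+1) → Bool → (Fin D → ℤ) → (Fin (D+1) → ℤ) :=
      fun k i s w => fun j => x j + (Fin.insertNth (α := fun _ => ℤ) i (ε s * (k:ℤ)) w) j with hζ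
    set Z : ℕ → Fin (D+1) → Bool → Finset (Fin (D+1) → ℤ) :=
      fun k i s => (nbD (Kf k i) (m - k) (AA (i,s))).image (ζ k i s) with hZ
    -- properties of points of Z
    have hZprop : ∀ k, 1 ≤ k → k ≤ m → ∀ i s, ∀ z ∈ Z k i s,
        z ∈ B ∧ dinf x z = k ∧ x i - z i = -(ε s) * k ∧
          ∀ j, j < i → (x j - z j).natAbs < k := by
      intro k hk1 hkm i s z hz
      obtain ⟨w, hw, rfl⟩ := Finset.mem_image.mp hz
      obtain ⟨hwbox, a, haAA, hwnear⟩ := Finset.mem_filter.mp hw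
      have hwboxj := Fintype.mem_piFinset.mp hwbox
      obtain ⟨y₀, hy₀, rfl⟩ := Finset.mem_image.mp haAA
      obtain ⟨hy₀T, hy₀m, hy₀i, hy₀lt⟩ := hclassprop i s y₀ hy₀
      have hzi : ζ k i s w i = x i + ε s * k := by
        simp only [hζ, Fin.insertNth_apply_same]
      have hzsa : ∀ j', ζ k i s w (i.succAbove j') = x (i.succAbove j') + w j' := by
        intro j'
        simp only [hζ, Fin.insertNth_apply_succAbove]
      have hεabs : ∀ b : Bool, (ε b * (k:ℤ)).natAbs = k := by
        intro b; cases b <;> simp [hε] <;> omega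
      have hKfk : ∀ j', Kf k i j' ≤ k := by
        intro j'; simp only [hKf]; split <;> omega
      -- dinf x z = k
      have hdz : dinf x (ζ k i s w) = k := by
        apply le_antisymm
        · apply dinf_le
          intro j
          rcases eq_or_ne j i with rfl | hne
          · rw [hzi]
            have := hεabs s
            omega
          · obtain ⟨j', rfl⟩ := Fin.exists_succAbove_eq hne
            rw [hzsa j']
            have h1 := hwboxj j'
            rw [Finset.mem_Icc] at h1
            have h2 := hKfk j'
            omega
        · have h3 := coord_le_dinf x (ζ k i s w) i
          rw [hzi] at h3
          have := hεabs s
          omega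
      -- dinf z y₀ ≤ m - k
      have hdzy : dinf (ζ k i s w) y₀ ≤ m - k := by
        apply dinf_le
        intro j
        rcases eq_or_ne j i with rfl | hne
        · rw [hzi]
          cases s <;> simp [hε] at hy₀i ⊢ <;> omega
        · obtain ⟨j', rfl⟩ := Fin.exists_succAbove_eq hne
          rw [hzsa j']
          have h4 := hwnear j'
          simp only [hτ] at h4
          omega
      -- geodesic equality and membership in T
      have htri := dinf_triangle x (ζ k i s w) y₀
      rw [hy₀m, hdz] at htri
      have hzT : ζ k i s w ∈ T := by
        apply hstar y₀ hy₀T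
        rw [hdz, hy₀m]
        omega
      refine ⟨?_, hdz, ?_, ?_⟩
      · rw [hB]
        exact Finset.mem_filter.mpr ⟨hzT, by rw [hdz]; omega⟩
      · rw [hzi]; ring
      · intro j hj
        have hne : j ≠ i := ne_of_lt hj
        obtain ⟨j', rfl⟩ := Fin.exists_succAbove_eq hne
        rw [hzsa j']
        have h1 := hwboxj j'
        rw [Finset.mem_Icc] at h1
        have h2 : Kf k i j' = k - 1 := by simp only [hKf, if_pos hj]
        rw [h2] at h1
        omega
    -- index set and disjointness
    set idx := (Finset.Icc 1 m) ×ˢ (Finset.univ : Finset ((Fin (D+1)) × Bool)) with hidx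
    have hqmem : ∀ q ∈ idx, 1 ≤ q.1 ∧ q.1 ≤ m := by
      intro q hq
      rw [hidx, Finset.mem_product] at hq
      exact Finset.mem_Icc.mp hq.1
    have hdisj : ∀ q ∈ idx, ∀ q' ∈ idx, q ≠ q' →
        Disjoint (Z q.1 q.2.1 q.2.2) (Z q'.1 q'.2.1 q'.2.2) := by
      rintro ⟨k, i, s⟩ hq ⟨k', i', s'⟩ hq' hne
      obtain ⟨hk1, hkm⟩ := hqmem _ hq
      obtain ⟨hk1', hkm'⟩ := hqmem _ hq'
      rw [Finset.disjoint_left]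
      intro z hz hz'
      obtain ⟨_, hdz, hzi, hzlt⟩ := hZprop k hk1 hkm i s z hz
      obtain ⟨_, hdz', hzi', hzlt'⟩ := hZprop k' hk1' hkm' i' s' z hz'
      have hkk : k = k' := by rw [← hdz, ← hdz']
      subst hkk
      rcases lt_trichotomy i i' with h | h | h
      · have h1 := hzlt' i h
        have h2 : (x i - z i).natAbs = k := by
          rw [hzi]; cases s <;> simp [hε] <;> omega
        omega
      · subst h
        have hss : s ≠ s' := by
          intro hss; exact hne (by rw [hss])
        rw [hzi] at hzi'
        cases s <;> cases s' <;> simp [hε] at hzi' hss ⊢ <;> omega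
      · have h1 := hzlt i' h
        have h2 : (x i' - z i').natAbs = k := by
          rw [hzi']; cases s' <;> simp [hε] <;> omega
        omega
    -- total cardinality bound
    have hcard_le : ∑ q ∈ idx, (Z q.1 q.2.1 q.2.2).card ≤ B.card := by
      rw [← Finset.card_biUnion hdisj]
      apply Finset.card_le_card
      intro z hz
      obtain ⟨q, hq, hzq⟩ := Finset.mem_biUnion.mp hz
      obtain ⟨hk1, hkm⟩ := hqmem _ hq
      obtain ⟨k, i, s⟩ := q
      exact (hZprop k hk1 hkm i s z hzq).1
    -- cardinality of Z
    have hcardZ : ∀ k i s, (Z k i s).card = (nbD (Kf k i) (m-k) (AA (i,s))).card := by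
      intro k i s
      apply Finset.card_image_of_injOn
      intro w _ w' _ heq
      funext j'
      have h1 := congrFun heq (i.succAbove j')
      simp only [hζ, Fin.insertNth_apply_succAbove] at h1
      omega
    -- lower bound per class and radius
    have hlow : ∀ k, 1 ≤ k → k ≤ m → ∀ c : (Fin (D+1)) × Bool,
        (2*k-1)^D * (AA c).card ≤ (2*m-1)^D * (Z k c.1 c.2).card := by
      rintro k hk1 hkm ⟨i, s⟩
      rw [hcardZ]
      have hKM : ∀ j', Kf m i j' = Kf k i j' + (m - k) := by
        intro j'; simp only [hKf]; split <;> omega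
      have hC2 := lemC D (Kf k i) (Kf m i) (m - k) hKM (AA (i,s)) (hbound i s)
      have hprod : (2*k-1)^D * (∏ j', (2 * Kf m i j' + 1))
          ≤ (2*m-1)^D * (∏ j', (2 * Kf k i j' + 1)) := by
        calc (2*k-1)^D * (∏ j', (2 * Kf m i j' + 1))
            = ∏ j' : Fin D, (2*k-1) * (2 * Kf m i j' + 1) := by
              rw [Finset.prod_mul_distrib, Finset.prod_const, Finset.card_univ, Fintype.card_fin]
          _ ≤ ∏ j' : Fin D, (2*m-1) * (2 * Kf k i j' + 1) := by
              apply Finset.prod_le_prod'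
              intro j' _
              simp only [hKf]
              split
              · have e1 : 2*(m-1)+1 = 2*m-1 := by omega
                have e2 : 2*(k-1)+1 = 2*k-1 := by omega
                rw [e1, e2, Nat.mul_comm]
              · obtain ⟨a, rfl⟩ : ∃ a, k = a + 1 := ⟨k - 1, by omega⟩
                obtain ⟨e, rfl⟩ : ∃ e, m = a + 1 + e := ⟨m - (a+1), by omega⟩
                have e1 : 2*(a+1)-1 = 2*a+1 := by omega
                have e2 : 2*(a+1+e)-1 = 2*a+2*e+1 := by omega
                rw [e1, e2]
                nlinarith
          _ = (2*m-1)^D * (∏ j', (2 * Kf k i j' + 1)) := by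
              rw [Finset.prod_mul_distrib, Finset.prod_const, Finset.card_univ, Fintype.card_fin]
      have hprodpos : 0 < ∏ j' : Fin D, (2 * Kf m i j' + 1) :=
        Finset.prod_pos fun j' _ => by omega
      have hchain : (∏ j' : Fin D, (2 * Kf m i j' + 1)) * ((2*k-1)^D * (AA (i,s)).card)
          ≤ (∏ j' : Fin D, (2 * Kf m i j' + 1)) * ((2*m-1)^D * (nbD (Kf k i) (m-k) (AA (i,s))).card) := by
        calc (∏ j' : Fin D, (2 * Kf m i j' + 1)) * ((2*k-1)^D * (AA (i,s)).card)
            = ((2*k-1)^D * (∏ j', (2 * Kf m i j' + 1))) * (AA (i,s)).card := by ring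
          _ ≤ ((2*m-1)^D * (∏ j', (2 * Kf k i j' + 1))) * (AA (i,s)).card :=
              Nat.mul_le_mul_right _ hprod
          _ = (2*m-1)^D * ((∏ j', (2 * Kf k i j' + 1)) * (AA (i,s)).card) := by ring
          _ ≤ (2*m-1)^D * ((∏ j', (2 * Kf m i j' + 1)) * (nbD (Kf k i) (m-k) (AA (i,s))).card) :=
              Nat.mul_le_mul_left _ hC2
          _ = (∏ j' : Fin D, (2 * Kf m i j' + 1)) * ((2*m-1)^D * (nbD (Kf k i) (m-k) (AA (i,s))).card) := by ring
      exact Nat.le_of_mul_le_mul_left hchain hprodpos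
    -- sum over classes and radii
    have hsum1 : ∀ k ∈ Finset.Icc 1 m,
        (2*k-1)^D * S.card ≤ (2*m-1)^D * ∑ c : (Fin (D+1)) × Bool, (Z k c.1 c.2).card := by
      intro k hk
      obtain ⟨hk1, hkm⟩ := Finset.mem_Icc.mp hk
      calc (2*k-1)^D * S.card = ∑ c : (Fin (D+1)) × Bool, (2*k-1)^D * (AA c).card := by
            rw [← Finset.mul_sum, hpart]
            congr 1
            exact Finset.sum_congr rfl fun c _ => (hcardAA c).symm
        _ ≤ ∑ c : (Fin (D+1)) × Bool, (2*m-1)^D * (Z k c.1 c.2).card :=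
            Finset.sum_le_sum fun c _ => hlow k hk1 hkm c
        _ = (2*m-1)^D * ∑ c : (Fin (D+1)) × Bool, (Z k c.1 c.2).card := by
            rw [Finset.mul_sum]
    have key1 : (∑ k ∈ Finset.Icc 1 m, (2*k-1)^D) * S.card ≤ (2*m-1)^D * B.card := by
      calc (∑ k ∈ Finset.Icc 1 m, (2*k-1)^D) * S.card
          = ∑ k ∈ Finset.Icc 1 m, (2*k-1)^D * S.card := by rw [Finset.sum_mul]
        _ ≤ ∑ k ∈ Finset.Icc 1 m, (2*m-1)^D * ∑ c : (Fin (D+1)) × Bool, (Z k c.1 c.2).card :=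
            Finset.sum_le_sum hsum1
        _ = (2*m-1)^D * ∑ k ∈ Finset.Icc 1 m, ∑ c : (Fin (D+1)) × Bool, (Z k c.1 c.2).card := by
            rw [Finset.mul_sum]
        _ = (2*m-1)^D * ∑ q ∈ idx, (Z q.1 q.2.1 q.2.2).card := by
            rw [hidx, Finset.sum_product]
        _ ≤ (2*m-1)^D * B.card := Nat.mul_le_mul_left _ hcard_le
    -- arithmetic
    have hQeq : ∑ k ∈ Finset.Icc 1 m, (2*k-1)^D = ∑ i ∈ Finset.range m, (2*i+1)^D := by
      rw [sum_Icc_one]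
      apply Finset.sum_congr rfl
      intro i _
      have h21 : 2*(i+1)-1 = 2*i+1 := by omega
      rw [h21]
    have harith := teleQ D m hm2
    rw [← hQeq] at harith
    -- combine
    have hfin : m^2 * ((2*m-1)^D * S.card) ≤ (D+1) * (2*m+1) * ((2*m-1)^D * B.card) := by
      calc m^2 * ((2*m-1)^D * S.card)
          = (m^2 * (2*m-1)^D) * S.card := by ring
        _ ≤ ((D+1) * (2*m+1) * ∑ k ∈ Finset.Icc 1 m, (2*k-1)^D) * S.card :=
            Nat.mul_le_mul_right _ harith
        _ = (D+1) * (2*m+1) * ((∑ k ∈ Finset.Icc 1 m, (2*k-1)^D) * S.card) := by ring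
        _ ≤ (D+1) * (2*m+1) * ((2*m-1)^D * B.card) :=
            Nat.mul_le_mul_left _ key1
    have hpowpos : 0 < (2*m-1)^D := Nat.pow_pos (by omega)
    have hfin2 : (2*m-1)^D * (m^2 * S.card) ≤ (2*m-1)^D * ((D+1) * (2*m+1) * B.card) := by
      calc (2*m-1)^D * (m^2 * S.card) = m^2 * ((2*m-1)^D * S.card) := by ring
        _ ≤ (D+1) * (2*m+1) * ((2*m-1)^D * B.card) := hfin
        _ = (2*m-1)^D * ((D+1) * (2*m+1) * B.card) := by ring
    exact Nat.le_of_mul_le_mul_left hfin2 hpowpos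
  -- conversion to ℝ
  have keyR : (m:ℝ) * (m:ℝ) * (S.card:ℝ) ≤ ((D:ℝ)+1) * (2*(m:ℝ)+1) * (B.card:ℝ) := by
    have hcast : ((m^2 * S.card : ℕ) : ℝ) ≤ (((D+1) * (2*m+1) * B.card : ℕ) : ℝ) := by
      exact_mod_cast key
    push_cast at hcast
    nlinarith [hcast]
  push_cast
  have hgoal : (m:ℝ) / (2*(m:ℝ)+1) * (S.card:ℝ) * ((m:ℝ)/((D:ℝ)+1))
      = ((m:ℝ)*(m:ℝ)*(S.card:ℝ)) / ((2*(m:ℝ)+1)*((D:ℝ)+1)) := by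
    field_simp
  rw [hgoal, div_le_iff₀ (by positivity)]
  nlinarith [keyR]
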